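/- Fix integers k ≥ 4 and ℓ ≥ 2. Under the Threshold-Symmetric Hybrid rule (a uniform coin b ∈ {0,1} independent of ℓ i.i.d. uniform sign vectors ω₁, …, ω_ℓ ∈ (Fin k → Bool); select the least index in MID if any exists, otherwise select the index with maximum X_j if b = 0 and with minimum X_j if b = 1, breaking ties by least index), the projected type frequencies are: P(X_J = 0) = (β^ℓ/2)·(1 − (1 − 1/(2(k+1)))^ℓ + (1/(2(k+1)))^ℓ), P(X_J = 1) = (β^ℓ/2)·((1 − 1/(2(k+1)))^ℓ − (1/(2(k+1)))^ℓ), and P(X_J ≥ 2) = 1 − β^ℓ/2, where β = (k+1)/2^{k−1}. -/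

import Mathlib

/-- Number of positive literals (true coordinates) of a sign vector. -/
def numPos (k : ℕ) (ω : Fin k → Bool) : ℕ :=
  (Finset.univ.filter fun i => ω i = true).card

/-- The class MID: `2 ≤ X ≤ k-2`. -/
abbrev InMID (k x : ℕ) : Prop := 2 ≤ x ∧ x ≤ k - 2

/-- The least index attaining the maximum of `f` (ties broken by least index). -/
def leastArgmax {ℓ : ℕ} (hℓ : 0 < ℓ) (f : Fin ℓ → ℕ) : Fin ℓ :=
  have hne : (Finset.univ : Finset (Fin ℓ)).Nonempty := ⟨⟨0, hℓ⟩, Finset.mem_univ _⟩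
  have h2 : (Finset.univ.filter fun j => f j = Finset.univ.sup' hne f).Nonempty := by
    obtain ⟨b, hb, hb2⟩ := Finset.exists_mem_eq_sup' hne f
    exact ⟨b, Finset.mem_filter.mpr ⟨hb, hb2.symm⟩⟩
  (Finset.univ.filter fun j => f j = Finset.univ.sup' hne f).min' h2

/-- The least index attaining the minimum of `f` (ties broken by least index). -/
def leastArgmin {ℓ : ℕ} (hℓ : 0 < ℓ) (f : Fin ℓ → ℕ) : Fin ℓ :=
  have hne : (Finset.univ : Finset (Fin ℓ)).Nonempty := ⟨⟨0, hℓ⟩, Finset.mem_univ _⟩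
  have h2 : (Finset.univ.filter fun j => f j = Finset.univ.inf' hne f).Nonempty := by
    obtain ⟨b, hb, hb2⟩ := Finset.exists_mem_eq_inf' hne f
    exact ⟨b, Finset.mem_filter.mpr ⟨hb, hb2.symm⟩⟩
  (Finset.univ.filter fun j => f j = Finset.univ.inf' hne f).min' h2

/-- The Threshold-Symmetric Hybrid selection rule: select the least index in MID if any;
otherwise, if the coin is `b = 0` (here `b = false`) select the index with maximum number
of positives, and if `b = 1` (here `b = true`) the index with minimum number of positives,
ties broken by least index. -/
def selectHYB (k ℓ : ℕ) (hℓ : 0 < ℓ) (b : Bool) (ωs : Fin ℓ → Fin k → Bool) : Fin ℓ :=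
  let mids : Finset (Fin ℓ) := Finset.univ.filter fun j => InMID k (numPos k (ωs j))
  if h : mids.Nonempty then mids.min' h
  else if b then leastArgmin hℓ (fun j => numPos k (ωs j))
  else leastArgmax hℓ (fun j => numPos k (ωs j))

open Finset

lemma numPos_le (k : ℕ) (ω : Fin k → Bool) : numPos k ω ≤ k :=
  le_trans (Finset.card_filter_le _ _) (by simp)

lemma card_numPos_eq (k m : ℕ) :
    ((univ : Finset (Fin k → Bool)).filter fun ω => numPos k ω = m).card = k.choose m := by
  rw [show k.choose m = (Finset.powersetCard m (univ : Finset (Fin k))).card by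
    rw [Finset.card_powersetCard]; simp]
  apply Finset.card_bij (fun ω _ => univ.filter fun i => ω i = true)
  · intro ω hω
    rw [Finset.mem_powersetCard]
    exact ⟨Finset.subset_univ _, (Finset.mem_filter.mp hω).2⟩
  · intro a ha b hb hab
    funext i
    have : (i ∈ univ.filter fun i => a i = true) ↔ (i ∈ univ.filter fun i => b i = true) := by
      rw [hab]
    simp only [Finset.mem_filter, Finset.mem_univ, true_and] at this
    cases h : a i <;> cases h' : b i <;> simp_all
  · intro s hs
    rw [Finset.mem_powersetCard] at hs
    refine ⟨fun i => decide (i ∈ s), ?_, ?_⟩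
    · rw [Finset.mem_filter]
      refine ⟨Finset.mem_univ _, ?_⟩
      simp only [numPos]
      rw [← hs.2]
      congr 1
      ext i
      simp
    · ext i
      simp

lemma card_numPos_mem (k : ℕ) (S : Finset ℕ) :
    ((univ : Finset (Fin k → Bool)).filter fun ω => numPos k ω ∈ S).card
      = ∑ m ∈ S, k.choose m := by
  have : ((univ : Finset (Fin k → Bool)).filter fun ω => numPos k ω ∈ S)
      = S.biUnion fun m => (univ : Finset (Fin k → Bool)).filter fun ω => numPos k ω = m := by
    ext ω
    simp [Finset.mem_biUnion, eq_comm]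
  rw [this, Finset.card_biUnion, Finset.sum_congr rfl fun m _ => card_numPos_eq k m]
  intro a _ b _ hab
  simp only [Finset.disjoint_left, Finset.mem_filter]
  rintro ω ⟨-, h1⟩ ⟨-, h2⟩
  exact hab (h1 ▸ h2 ▸ rfl)

lemma card_forall (ℓ : ℕ) {α : Type*} [Fintype α] [DecidableEq α] (P : α → Prop) [DecidablePred P] :
    ((univ : Finset (Fin ℓ → α)).filter fun f => ∀ j, P (f j)).card
      = ((univ : Finset α).filter P).card ^ ℓ := by
  rw [← Fintype.card_subtype, ← Fintype.card_subtype]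
  rw [Fintype.card_congr (Equiv.subtypePiEquivPi (p := fun _ : Fin ℓ => P))]
  simp [Fintype.card_pi]


lemma leastArgmax_le {ℓ : ℕ} (hℓ : 0 < ℓ) (f : Fin ℓ → ℕ) (j : Fin ℓ) :
    f j ≤ f (leastArgmax hℓ f) := by
  have hne : (Finset.univ : Finset (Fin ℓ)).Nonempty := ⟨⟨0, hℓ⟩, Finset.mem_univ _⟩
  have h2 : (Finset.univ.filter fun j => f j = Finset.univ.sup' hne f).Nonempty := by
    obtain ⟨b, hb, hb2⟩ := Finset.exists_mem_eq_sup' hne f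
    exact ⟨b, Finset.mem_filter.mpr ⟨hb, hb2.symm⟩⟩
  have hmem := Finset.min'_mem _ h2
  have hval : f (leastArgmax hℓ f) = Finset.univ.sup' hne f :=
    (Finset.mem_filter.mp hmem).2
  rw [hval]
  exact Finset.le_sup' f (Finset.mem_univ j)

lemma leastArgmin_le {ℓ : ℕ} (hℓ : 0 < ℓ) (f : Fin ℓ → ℕ) (j : Fin ℓ) :
    f (leastArgmin hℓ f) ≤ f j := by
  have hne : (Finset.univ : Finset (Fin ℓ)).Nonempty := ⟨⟨0, hℓ⟩, Finset.mem_univ _⟩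
  have h2 : (Finset.univ.filter fun j => f j = Finset.univ.inf' hne f).Nonempty := by
    obtain ⟨b, hb, hb2⟩ := Finset.exists_mem_eq_inf' hne f
    exact ⟨b, Finset.mem_filter.mpr ⟨hb, hb2.symm⟩⟩
  have hmem := Finset.min'_mem _ h2
  have hval : f (leastArgmin hℓ f) = Finset.univ.inf' hne f :=
    (Finset.mem_filter.mp hmem).2
  rw [hval]
  exact Finset.inf'_le f (Finset.mem_univ j)

section SelectIff
variable {k ℓ : ℕ} (h : 0 < ℓ) (ωs : Fin ℓ → Fin k → Bool)

lemma select_midcase (b : Bool)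
    (hm : (Finset.univ.filter fun j => InMID k (numPos k (ωs j))).Nonempty) :
    InMID k (numPos k (ωs (selectHYB k ℓ h b ωs))) := by
  have : selectHYB k ℓ h b ωs
      = (Finset.univ.filter fun j => InMID k (numPos k (ωs j))).min' hm := by
    simp [selectHYB, hm]
  rw [this]
  exact (Finset.mem_filter.mp (Finset.min'_mem _ hm)).2

lemma select_false_eq (hm : ¬ (Finset.univ.filter fun j => InMID k (numPos k (ωs j))).Nonempty) :
    selectHYB k ℓ h false ωs = leastArgmax h (fun j => numPos k (ωs j)) := by
  simp [selectHYB, hm]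

lemma select_true_eq (hm : ¬ (Finset.univ.filter fun j => InMID k (numPos k (ωs j))).Nonempty) :
    selectHYB k ℓ h true ωs = leastArgmin h (fun j => numPos k (ωs j)) := by
  simp [selectHYB, hm]

lemma mids_empty_iff :
    (¬ (Finset.univ.filter fun j => InMID k (numPos k (ωs j))).Nonempty)
      ↔ ∀ j, ¬ InMID k (numPos k (ωs j)) := by
  rw [Finset.not_nonempty_iff_eq_empty, Finset.filter_eq_empty_iff]
  simp

lemma selF0 :
    numPos k (ωs (selectHYB k ℓ h false ωs)) = 0 ↔ ∀ j, numPos k (ωs j) = 0 := by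
  by_cases hm : (Finset.univ.filter fun j => InMID k (numPos k (ωs j))).Nonempty
  · have := select_midcase h ωs false hm
    constructor
    · intro h0; rw [h0] at this; exact absurd this.1 (by omega)
    · intro hall
      obtain ⟨j, hj⟩ := hm
      have := (Finset.mem_filter.mp hj).2
      rw [hall j] at this
      exact absurd this.1 (by omega)
  · rw [select_false_eq h ωs hm]
    constructor
    · intro h0 j
      have := leastArgmax_le h (fun j => numPos k (ωs j)) j
      omega
    · intro hall; exact hall _

lemma selT0 :
    numPos k (ωs (selectHYB k ℓ h true ωs)) = 0
      ↔ (∀ j, ¬ InMID k (numPos k (ωs j))) ∧ ∃ j, numPos k (ωs j) = 0 := by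
  by_cases hm : (Finset.univ.filter fun j => InMID k (numPos k (ωs j))).Nonempty
  · have hmid := select_midcase h ωs true hm
    constructor
    · intro h0; rw [h0] at hmid; exact absurd hmid.1 (by omega)
    · rintro ⟨hall, -⟩
      obtain ⟨j, hj⟩ := hm
      exact absurd ((Finset.mem_filter.mp hj).2) (hall j)
  · rw [select_true_eq h ωs hm]
    constructor
    · intro h0
      exact ⟨(mids_empty_iff ωs).mp hm, _, h0⟩
    · rintro ⟨-, j, hj⟩
      have := leastArgmin_le h (fun j => numPos k (ωs j)) j
      omega

lemma selF1 :
    numPos k (ωs (selectHYB k ℓ h false ωs)) = 1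
      ↔ (∀ j, numPos k (ωs j) ≤ 1) ∧ ∃ j, numPos k (ωs j) = 1 := by
  by_cases hm : (Finset.univ.filter fun j => InMID k (numPos k (ωs j))).Nonempty
  · have hmid := select_midcase h ωs false hm
    constructor
    · intro h0; rw [h0] at hmid; exact absurd hmid.1 (by omega)
    · rintro ⟨hall, -⟩
      obtain ⟨j, hj⟩ := hm
      have := (Finset.mem_filter.mp hj).2
      have := hall j
      omega
  · rw [select_false_eq h ωs hm]
    constructor
    · intro h0
      refine ⟨fun j => ?_, _, h0⟩
      have := leastArgmax_le h (fun j => numPos k (ωs j)) j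
      omega
    · rintro ⟨hall, j, hj⟩
      have h1 := leastArgmax_le h (fun j => numPos k (ωs j)) j
      have h2 := hall (leastArgmax h (fun j => numPos k (ωs j)))
      omega

lemma selT1 :
    numPos k (ωs (selectHYB k ℓ h true ωs)) = 1
      ↔ (∀ j, ¬ InMID k (numPos k (ωs j)) ∧ numPos k (ωs j) ≠ 0)
          ∧ ∃ j, numPos k (ωs j) = 1 := by
  by_cases hm : (Finset.univ.filter fun j => InMID k (numPos k (ωs j))).Nonempty
  · have hmid := select_midcase h ωs true hm
    constructor
    · intro h0; rw [h0] at hmid; exact absurd hmid.1 (by omega)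
    · rintro ⟨hall, -⟩
      obtain ⟨j, hj⟩ := hm
      exact absurd ((Finset.mem_filter.mp hj).2) (hall j).1
  · rw [select_true_eq h ωs hm]
    constructor
    · intro h0
      refine ⟨fun j => ⟨(mids_empty_iff ωs).mp hm j, ?_⟩, _, h0⟩
      have := leastArgmin_le h (fun j => numPos k (ωs j)) j
      omega
    · rintro ⟨hall, j, hj⟩
      have h1 := leastArgmin_le h (fun j => numPos k (ωs j)) j
      have h2 := (hall (leastArgmin h (fun j => numPos k (ωs j)))).2
      omega

end SelectIff


lemma card_bool_split {T : Type*} [Fintype T] [DecidableEq T]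
    (P : Bool × T → Prop) [DecidablePred P] :
    ((univ : Finset (Bool × T)).filter P).card
      = ((univ : Finset T).filter fun t => P (false, t)).card
        + ((univ : Finset T).filter fun t => P (true, t)).card := by
  have key : ∀ b : Bool,
      (((univ : Finset (Bool × T)).filter P).filter fun p => p.1 = b).card
        = ((univ : Finset T).filter fun t => P (b, t)).card := by
    intro b
    apply Finset.card_bij (fun p _ => p.2)
    · rintro ⟨b', t⟩ hp
      simp only [Finset.mem_filter, Finset.mem_univ, true_and] at hp ⊢
      obtain ⟨hP, rfl⟩ := hp
      exact hP
    · rintro ⟨b1, t1⟩ h1 ⟨b2, t2⟩ h2 heq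
      simp only [Finset.mem_filter] at h1 h2
      simp only at heq
      rw [Prod.ext_iff]
      exact ⟨h1.2.trans h2.2.symm, heq⟩
    · intro t ht
      simp only [Finset.mem_filter, Finset.mem_univ, true_and] at ht
      exact ⟨(b, t), by simp [ht], rfl⟩
  rw [← key false, ← key true]
  rw [Finset.card_eq_sum_card_fiberwise
    (f := fun p : Bool × T => p.1) (t := (univ : Finset Bool)) (fun x _ => Finset.mem_univ _)]
  rw [Fintype.sum_bool]
  ring


lemma card_filter_pred (k : ℕ) (Q : ℕ → Prop) [DecidablePred Q] (S : Finset ℕ)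
    (hQ : ∀ x ≤ k, (Q x ↔ x ∈ S)) :
    ((univ : Finset (Fin k → Bool)).filter fun ω => Q (numPos k ω)).card
      = ∑ m ∈ S, k.choose m := by
  rw [Finset.filter_congr fun ω _ => hQ _ (numPos_le k ω), card_numPos_mem]

lemma choose_pred (k : ℕ) (hk : 4 ≤ k) : k.choose (k-1) = k := by
  rw [Nat.choose_symm (show 1 ≤ k by omega), Nat.choose_one_right]

lemma cardA (k : ℕ) (hk : 4 ≤ k) :
    ((univ : Finset (Fin k → Bool)).filter fun ω => ¬ InMID k (numPos k ω)).card = 2*k+2 := by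
  refine (card_filter_pred k (fun x => ¬ InMID k x) ({0, 1, k-1, k} : Finset ℕ)
    (fun x hx => by simp [InMID]; omega)).trans ?_
  rw [show ({0,1,k-1,k} : Finset ℕ) = insert 0 (insert 1 (insert (k-1) {k})) from rfl]
  rw [Finset.sum_insert (by simp; omega), Finset.sum_insert (by simp; omega),
    Finset.sum_insert (by simp; omega), Finset.sum_singleton,
    Nat.choose_zero_right, Nat.choose_one_right, Nat.choose_self, choose_pred k hk]
  omega

lemma cardB (k : ℕ) (hk : 4 ≤ k) :
    ((univ : Finset (Fin k → Bool)).filter fun ω =>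
      ¬ InMID k (numPos k ω) ∧ numPos k ω ≠ 0).card = 2*k+1 := by
  refine (card_filter_pred k (fun x => ¬ InMID k x ∧ x ≠ 0) ({1, k-1, k} : Finset ℕ)
    (fun x hx => by simp [InMID]; omega)).trans ?_
  rw [show ({1,k-1,k} : Finset ℕ) = insert 1 (insert (k-1) {k}) from rfl]
  rw [Finset.sum_insert (by simp; omega), Finset.sum_insert (by simp; omega),
    Finset.sum_singleton, Nat.choose_one_right, Nat.choose_self, choose_pred k hk]
  omega

lemma cardC (k : ℕ) (hk : 4 ≤ k) :
    ((univ : Finset (Fin k → Bool)).filter fun ω => numPos k ω ≤ 1).card = k+1 := by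
  refine (card_filter_pred k (fun x => x ≤ 1) ({0, 1} : Finset ℕ)
    (fun x hx => by simp; omega)).trans ?_
  rw [show ({0,1} : Finset ℕ) = insert 0 {1} from rfl]
  rw [Finset.sum_insert (by simp), Finset.sum_singleton,
    Nat.choose_zero_right, Nat.choose_one_right]
  omega

lemma cardD (k : ℕ) (hk : 4 ≤ k) :
    ((univ : Finset (Fin k → Bool)).filter fun ω =>
      (¬ InMID k (numPos k ω) ∧ numPos k ω ≠ 0) ∧ numPos k ω ≠ 1).card = k+1 := by
  refine (card_filter_pred k (fun x => (¬ InMID k x ∧ x ≠ 0) ∧ x ≠ 1) ({k-1, k} : Finset ℕ)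
    (fun x hx => by simp [InMID]; omega)).trans ?_
  rw [show ({k-1,k} : Finset ℕ) = insert (k-1) {k} from rfl]
  rw [Finset.sum_insert (by simp; omega), Finset.sum_singleton,
    Nat.choose_self, choose_pred k hk]

lemma cardE (k : ℕ) (hk : 4 ≤ k) :
    ((univ : Finset (Fin k → Bool)).filter fun ω => numPos k ω ≤ 1 ∧ numPos k ω ≠ 1).card = 1 := by
  refine (card_filter_pred k (fun x => x ≤ 1 ∧ x ≠ 1) ({0} : Finset ℕ)
    (fun x hx => by simp; omega)).trans ?_
  simp

lemma cardZ (k : ℕ) (hk : 4 ≤ k) :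
    ((univ : Finset (Fin k → Bool)).filter fun ω => numPos k ω = 0).card = 1 := by
  refine (card_filter_pred k (fun x => x = 0) ({0} : Finset ℕ)
    (fun x hx => by simp)).trans ?_
  simp


/-- For `k ≥ 4`, `ℓ ≥ 2`, under the Threshold-Symmetric Hybrid rule (a fair
coin `b` together with `ℓ` i.i.d. uniform sign vectors, selected index `J`):
`P(X_J = 0) = (β^ℓ/2)(1 - (1 - 1/(2(k+1)))^ℓ + (1/(2(k+1)))^ℓ)`,
`P(X_J = 1) = (β^ℓ/2)((1 - 1/(2(k+1)))^ℓ - (1/(2(k+1)))^ℓ)`, and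
`P(X_J ≥ 2) = 1 - β^ℓ/2`, with `β = (k+1)/2^{k-1}` (probabilities computed as the number
of favourable pairs (coin, tuple of sign vectors) divided by `2^{kℓ+1}`). -/
theorem stmt15 (k ℓ : ℕ) (hk : 4 ≤ k) (hℓ : 2 ≤ ℓ) :
    ((Nat.card {p : Bool × (Fin ℓ → Fin k → Bool) //
            numPos k (p.2 (selectHYB k ℓ (by omega) p.1 p.2)) = 0} : ℝ)
          / 2 ^ (k * ℓ + 1)
        = ((((k : ℝ) + 1) / 2 ^ (k - 1)) ^ ℓ / 2)
            * (1 - (1 - 1 / (2 * ((k : ℝ) + 1))) ^ ℓ + (1 / (2 * ((k : ℝ) + 1))) ^ ℓ)) ∧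
    ((Nat.card {p : Bool × (Fin ℓ → Fin k → Bool) //
            numPos k (p.2 (selectHYB k ℓ (by omega) p.1 p.2)) = 1} : ℝ)
          / 2 ^ (k * ℓ + 1)
        = ((((k : ℝ) + 1) / 2 ^ (k - 1)) ^ ℓ / 2)
            * ((1 - 1 / (2 * ((k : ℝ) + 1))) ^ ℓ - (1 / (2 * ((k : ℝ) + 1))) ^ ℓ)) ∧
    ((Nat.card {p : Bool × (Fin ℓ → Fin k → Bool) //
            2 ≤ numPos k (p.2 (selectHYB k ℓ (by omega) p.1 p.2))} : ℝ)
          / 2 ^ (k * ℓ + 1)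
        = 1 - (((k : ℝ) + 1) / 2 ^ (k - 1)) ^ ℓ / 2) := by
  have hp : 0 < ℓ := by omega
  have hiff1 : ∀ x : ℕ, (¬ 2 ≤ x ∧ x = 0) ↔ x = 0 := fun x => by omega
  have hiff2 : ∀ x : ℕ, (¬ 2 ≤ x ∧ ¬ x = 0) ↔ x = 1 := fun x => by omega
  have hk1 : k - 1 + 1 = k := by omega
  -- instantiated tuple-level counts
  have cfA : ((univ : Finset (Fin ℓ → Fin k → Bool)).filter
      fun t => ∀ j, ¬ InMID k (numPos k (t j))).card = (2*k+2)^ℓ :=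
    (card_forall ℓ (fun ω => ¬ InMID k (numPos k ω))).trans (by rw [cardA k hk])
  have cfB : ((univ : Finset (Fin ℓ → Fin k → Bool)).filter
      fun t => ∀ j, ¬ InMID k (numPos k (t j)) ∧ numPos k (t j) ≠ 0).card = (2*k+1)^ℓ :=
    (card_forall ℓ (fun ω => ¬ InMID k (numPos k ω) ∧ numPos k ω ≠ 0)).trans (by rw [cardB k hk])
  have cfC : ((univ : Finset (Fin ℓ → Fin k → Bool)).filter
      fun t => ∀ j, numPos k (t j) ≤ 1).card = (k+1)^ℓ :=
    (card_forall ℓ (fun ω => numPos k ω ≤ 1)).trans (by rw [cardC k hk])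
  have cfD : ((univ : Finset (Fin ℓ → Fin k → Bool)).filter
      fun t => ∀ j, (¬ InMID k (numPos k (t j)) ∧ numPos k (t j) ≠ 0) ∧ numPos k (t j) ≠ 1).card
        = (k+1)^ℓ :=
    (card_forall ℓ (fun ω => (¬ InMID k (numPos k ω) ∧ numPos k ω ≠ 0) ∧ numPos k ω ≠ 1)).trans
      (by rw [cardD k hk])
  have cfE : ((univ : Finset (Fin ℓ → Fin k → Bool)).filter
      fun t => ∀ j, numPos k (t j) ≤ 1 ∧ numPos k (t j) ≠ 1).card = 1 :=
    (card_forall ℓ (fun ω => numPos k ω ≤ 1 ∧ numPos k ω ≠ 1)).trans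
      (by rw [cardE k hk, one_pow])
  have cfZ : ((univ : Finset (Fin ℓ → Fin k → Bool)).filter
      fun t => ∀ j, numPos k (t j) = 0).card = 1 :=
    (card_forall ℓ (fun ω => numPos k ω = 0)).trans (by rw [cardZ k hk, one_pow])
  -- event counts per coin
  have nE0f : ((univ : Finset (Fin ℓ → Fin k → Bool)).filter
      fun t => numPos k (t (selectHYB k ℓ hp false t)) = 0).card = 1 := by
    rw [Finset.filter_congr fun t _ => selF0 hp t]; exact cfZ
  have nE0t : ((univ : Finset (Fin ℓ → Fin k → Bool)).filter
      fun t => numPos k (t (selectHYB k ℓ hp true t)) = 0).card + (2*k+1)^ℓ = (2*k+2)^ℓ := by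
    rw [Finset.filter_congr fun t _ => selT0 hp t]
    have split := Finset.card_filter_add_card_filter_not
      (s := (univ : Finset (Fin ℓ → Fin k → Bool)).filter
        fun t => ∀ j, ¬ InMID k (numPos k (t j)))
      (p := fun t => ∃ j, numPos k (t j) = 0)
    rw [Finset.filter_filter, Finset.filter_filter] at split
    have e2 : ((univ : Finset (Fin ℓ → Fin k → Bool)).filter
        fun t => (∀ j, ¬ InMID k (numPos k (t j))) ∧ ¬ ∃ j, numPos k (t j) = 0)
        = (univ : Finset (Fin ℓ → Fin k → Bool)).filter
            fun t => ∀ j, ¬ InMID k (numPos k (t j)) ∧ numPos k (t j) ≠ 0 :=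
      Finset.filter_congr fun t _ => by
        constructor
        · rintro ⟨h1, h2⟩ j
          exact ⟨h1 j, fun hh => h2 ⟨j, hh⟩⟩
        · intro h
          exact ⟨fun j => (h j).1, fun ⟨j, hj⟩ => (h j).2 hj⟩
    rw [e2, cfA, cfB] at split
    exact split
  have nE1f : ((univ : Finset (Fin ℓ → Fin k → Bool)).filter
      fun t => numPos k (t (selectHYB k ℓ hp false t)) = 1).card + 1 = (k+1)^ℓ := by
    rw [Finset.filter_congr fun t _ => selF1 hp t]
    have split := Finset.card_filter_add_card_filter_not
      (s := (univ : Finset (Fin ℓ → Fin k → Bool)).filter fun t => ∀ j, numPos k (t j) ≤ 1)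
      (p := fun t => ∃ j, numPos k (t j) = 1)
    rw [Finset.filter_filter, Finset.filter_filter] at split
    have e2 : ((univ : Finset (Fin ℓ → Fin k → Bool)).filter
        fun t => (∀ j, numPos k (t j) ≤ 1) ∧ ¬ ∃ j, numPos k (t j) = 1)
        = (univ : Finset (Fin ℓ → Fin k → Bool)).filter
            fun t => ∀ j, numPos k (t j) ≤ 1 ∧ numPos k (t j) ≠ 1 :=
      Finset.filter_congr fun t _ => by
        constructor
        · rintro ⟨h1, h2⟩ j
          exact ⟨h1 j, fun hh => h2 ⟨j, hh⟩⟩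
        · intro h
          exact ⟨fun j => (h j).1, fun ⟨j, hj⟩ => (h j).2 hj⟩
    rw [e2, cfC, cfE] at split
    exact split
  have nE1t : ((univ : Finset (Fin ℓ → Fin k → Bool)).filter
      fun t => numPos k (t (selectHYB k ℓ hp true t)) = 1).card + (k+1)^ℓ = (2*k+1)^ℓ := by
    rw [Finset.filter_congr fun t _ => selT1 hp t]
    have split := Finset.card_filter_add_card_filter_not
      (s := (univ : Finset (Fin ℓ → Fin k → Bool)).filter
        fun t => ∀ j, ¬ InMID k (numPos k (t j)) ∧ numPos k (t j) ≠ 0)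
      (p := fun t => ∃ j, numPos k (t j) = 1)
    rw [Finset.filter_filter, Finset.filter_filter] at split
    have e2 : ((univ : Finset (Fin ℓ → Fin k → Bool)).filter
        fun t => (∀ j, ¬ InMID k (numPos k (t j)) ∧ numPos k (t j) ≠ 0)
          ∧ ¬ ∃ j, numPos k (t j) = 1)
        = (univ : Finset (Fin ℓ → Fin k → Bool)).filter
            fun t => ∀ j, (¬ InMID k (numPos k (t j)) ∧ numPos k (t j) ≠ 0)
              ∧ numPos k (t j) ≠ 1 :=
      Finset.filter_congr fun t _ => by
        constructor
        · rintro ⟨h1, h2⟩ j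
          exact ⟨h1 j, fun hh => h2 ⟨j, hh⟩⟩
        · intro h
          exact ⟨fun j => (h j).1, fun ⟨j, hj⟩ => (h j).2 hj⟩
    rw [e2, cfB, cfD] at split
    exact split
  -- pair-level counts
  have count0 : ((univ : Finset (Bool × (Fin ℓ → Fin k → Bool))).filter
      fun p => numPos k (p.2 (selectHYB k ℓ hp p.1 p.2)) = 0).card + (2*k+1)^ℓ
        = 1 + (2*k+2)^ℓ := by
    rw [card_bool_split]
    dsimp only
    rw [nE0f, Nat.add_assoc, nE0t]
  have count1 : ((univ : Finset (Bool × (Fin ℓ → Fin k → Bool))).filter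
      fun p => numPos k (p.2 (selectHYB k ℓ hp p.1 p.2)) = 1).card + 1 + (k+1)^ℓ
        = (k+1)^ℓ + (2*k+1)^ℓ := by
    rw [card_bool_split]
    dsimp only
    calc ((univ : Finset (Fin ℓ → Fin k → Bool)).filter
            fun t => numPos k (t (selectHYB k ℓ hp false t)) = 1).card
          + ((univ : Finset (Fin ℓ → Fin k → Bool)).filter
            fun t => numPos k (t (selectHYB k ℓ hp true t)) = 1).card + 1 + (k+1)^ℓ
        = (((univ : Finset (Fin ℓ → Fin k → Bool)).filter
            fun t => numPos k (t (selectHYB k ℓ hp false t)) = 1).card + 1)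
          + (((univ : Finset (Fin ℓ → Fin k → Bool)).filter
            fun t => numPos k (t (selectHYB k ℓ hp true t)) = 1).card + (k+1)^ℓ) := by ring
      _ = (k+1)^ℓ + (2*k+1)^ℓ := by rw [nE1f, nE1t]
  have total : ((univ : Finset (Bool × (Fin ℓ → Fin k → Bool)))).card = 2 * (2^k)^ℓ := by
    simp [Finset.card_univ, Fintype.card_fun]
  have count2 : ((univ : Finset (Bool × (Fin ℓ → Fin k → Bool))).filter
      fun p => 2 ≤ numPos k (p.2 (selectHYB k ℓ hp p.1 p.2))).card
      + ((univ : Finset (Bool × (Fin ℓ → Fin k → Bool))).filter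
      fun p => numPos k (p.2 (selectHYB k ℓ hp p.1 p.2)) = 0).card
      + ((univ : Finset (Bool × (Fin ℓ → Fin k → Bool))).filter
      fun p => numPos k (p.2 (selectHYB k ℓ hp p.1 p.2)) = 1).card = 2 * (2^k)^ℓ := by
    have split2 := Finset.card_filter_add_card_filter_not
      (s := (univ : Finset (Bool × (Fin ℓ → Fin k → Bool))))
      (p := fun p => 2 ≤ numPos k (p.2 (selectHYB k ℓ hp p.1 p.2)))
    have splitneg := Finset.card_filter_add_card_filter_not
      (s := (univ : Finset (Bool × (Fin ℓ → Fin k → Bool))).filter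
        fun p => ¬ 2 ≤ numPos k (p.2 (selectHYB k ℓ hp p.1 p.2)))
      (p := fun p => numPos k (p.2 (selectHYB k ℓ hp p.1 p.2)) = 0)
    rw [Finset.filter_filter, Finset.filter_filter] at splitneg
    have e1 : ((univ : Finset (Bool × (Fin ℓ → Fin k → Bool))).filter
        fun p => ¬ 2 ≤ numPos k (p.2 (selectHYB k ℓ hp p.1 p.2))
          ∧ numPos k (p.2 (selectHYB k ℓ hp p.1 p.2)) = 0)
        = (univ : Finset (Bool × (Fin ℓ → Fin k → Bool))).filter
            fun p => numPos k (p.2 (selectHYB k ℓ hp p.1 p.2)) = 0 :=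
      Finset.filter_congr fun p _ => hiff1 _
    have e2 : ((univ : Finset (Bool × (Fin ℓ → Fin k → Bool))).filter
        fun p => ¬ 2 ≤ numPos k (p.2 (selectHYB k ℓ hp p.1 p.2))
          ∧ ¬ numPos k (p.2 (selectHYB k ℓ hp p.1 p.2)) = 0)
        = (univ : Finset (Bool × (Fin ℓ → Fin k → Bool))).filter
            fun p => numPos k (p.2 (selectHYB k ℓ hp p.1 p.2)) = 1 :=
      Finset.filter_congr fun p _ => hiff2 _
    rw [e1, e2] at splitneg
    rw [total] at split2
    rw [Nat.add_assoc, splitneg]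
    exact split2
  -- real-number versions
  have hkR : (4:ℝ) ≤ (k:ℝ) := by exact_mod_cast hk
  have haah : (2*(k:ℝ)+2) ≠ 0 := by nlinarith
  have hcch : ((2:ℝ)^k) ≠ 0 := by positivity
  have haP : ((2*(k:ℝ)+2))^ℓ ≠ 0 := pow_ne_zero _ haah
  have hcP : (((2:ℝ)^k))^ℓ ≠ 0 := pow_ne_zero _ hcch
  have hK1 : ((k:ℝ)+1) ≠ 0 := by nlinarith
  have h2k1 : ((2:ℝ)^(k-1)) ≠ 0 := by positivity
  have h2k : (2:ℝ)^k = 2^(k-1) * 2 := by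
    conv_lhs => rw [← hk1]
    rw [pow_succ]
  have hb1 : ((k:ℝ)+1)/2^(k-1) = (2*(k:ℝ)+2)/2^k := by
    rw [h2k]; field_simp
  have hb2 : (1:ℝ) - 1/(2*((k:ℝ)+1)) = (2*(k:ℝ)+1)/(2*(k:ℝ)+2) := by
    field_simp; ring
  have hb3 : (1:ℝ)/(2*((k:ℝ)+1)) = 1/(2*(k:ℝ)+2) := by ring_nf
  have hpow : (2:ℝ)^(k*ℓ+1) = 2*((2:ℝ)^k)^ℓ := by
    rw [pow_succ, pow_mul]; ring
  have c0r : (((univ : Finset (Bool × (Fin ℓ → Fin k → Bool))).filter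
      fun p => numPos k (p.2 (selectHYB k ℓ hp p.1 p.2)) = 0).card : ℝ)
        = (2*(k:ℝ)+2)^ℓ - (2*(k:ℝ)+1)^ℓ + 1 := by
    have := congrArg (Nat.cast : ℕ → ℝ) count0
    push_cast at this
    linarith
  have c1r : (((univ : Finset (Bool × (Fin ℓ → Fin k → Bool))).filter
      fun p => numPos k (p.2 (selectHYB k ℓ hp p.1 p.2)) = 1).card : ℝ)
        = (2*(k:ℝ)+1)^ℓ - 1 := by
    have := congrArg (Nat.cast : ℕ → ℝ) count1
    push_cast at this
    linarith
  have c2r : (((univ : Finset (Bool × (Fin ℓ → Fin k → Bool))).filter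
      fun p => 2 ≤ numPos k (p.2 (selectHYB k ℓ hp p.1 p.2))).card : ℝ)
        = 2*((2:ℝ)^k)^ℓ - (2*(k:ℝ)+2)^ℓ := by
    have := congrArg (Nat.cast : ℕ → ℝ) count2
    push_cast at this
    linarith [c0r, c1r]
  have g1 : ((Nat.card {p : Bool × (Fin ℓ → Fin k → Bool) //
            numPos k (p.2 (selectHYB k ℓ hp p.1 p.2)) = 0} : ℝ)
          / 2 ^ (k * ℓ + 1)
        = ((((k : ℝ) + 1) / 2 ^ (k - 1)) ^ ℓ / 2)
            * (1 - (1 - 1 / (2 * ((k : ℝ) + 1))) ^ ℓ + (1 / (2 * ((k : ℝ) + 1))) ^ ℓ)) := by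
    rw [Nat.card_eq_fintype_card, Fintype.card_subtype, c0r, hpow, hb1, hb2, hb3,
      div_pow, div_pow, div_pow, one_pow]
    field_simp
  have g2 : ((Nat.card {p : Bool × (Fin ℓ → Fin k → Bool) //
            numPos k (p.2 (selectHYB k ℓ hp p.1 p.2)) = 1} : ℝ)
          / 2 ^ (k * ℓ + 1)
        = ((((k : ℝ) + 1) / 2 ^ (k - 1)) ^ ℓ / 2)
            * ((1 - 1 / (2 * ((k : ℝ) + 1))) ^ ℓ - (1 / (2 * ((k : ℝ) + 1))) ^ ℓ)) := by
    rw [Nat.card_eq_fintype_card, Fintype.card_subtype, c1r, hpow, hb1, hb2, hb3,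
      div_pow, div_pow, div_pow, one_pow]
    field_simp
  have g3 : ((Nat.card {p : Bool × (Fin ℓ → Fin k → Bool) //
            2 ≤ numPos k (p.2 (selectHYB k ℓ hp p.1 p.2))} : ℝ)
          / 2 ^ (k * ℓ + 1)
        = 1 - (((k : ℝ) + 1) / 2 ^ (k - 1)) ^ ℓ / 2) := by
    rw [Nat.card_eq_fintype_card, Fintype.card_subtype, c2r, hpow, hb1, div_pow]
    field_simp
  exact ⟨g1, g2, g3⟩
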